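/- Let a_lat > 0, a_brk ≥ 0, v ≥ 0, and y_c > 0. Suppose x, y : ℝ → ℝ are twice differentiable with x(0) = y(0) = 0, x'(0) = v, y'(0) = 0, and for all t ≥ 0: |y''(t)| ≤ a_lat, x''(t) ≥ −a_brk, and x'(t) ≥ 0. Set t_c = √(2 y_c / a_lat). Then every T ≥ 0 with y(T) ≥ y_c satisfies T ≥ t_c and x(T) ≥ v t_c − (a_brk t_c²)/2. -/

import Mathlib

/-- If `f` is differentiable and its derivative is nonnegative on `[0,∞)`,
then `f` is monotone on `[0,∞)`. -/
lemma mono_of_deriv_nonneg_Ici (f : ℝ → ℝ) (hf : Differentiable ℝ f)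
    (h : ∀ t : ℝ, 0 ≤ t → 0 ≤ deriv f t) : MonotoneOn f (Set.Ici 0) := by
  apply monotoneOn_of_deriv_nonneg (convex_Ici 0) hf.continuous.continuousOn
    (fun t _ => (hf t).differentiableWithinAt)
  intro t ht
  rw [interior_Ici] at ht
  exact h t ht.le

/-- Particle-model lower bound on swerve manoeuvres: for any planar trajectory whose
lateral acceleration is bounded by `a_lat`, whose longitudinal deceleration is bounded by
`a_brk`, and which always moves forward, the longitudinal distance covered upon reaching
the lateral clearance distance `y_c` is at least `v t_c − a_brk t_c²/2`
with `t_c = √(2 y_c / a_lat)`. -/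
theorem stmt_3 (a_lat a_brk v y_c : ℝ) (halat : 0 < a_lat) (habrk : 0 ≤ a_brk)
    (hv : 0 ≤ v) (hyc : 0 < y_c) (x y : ℝ → ℝ)
    (hxd1 : Differentiable ℝ x) (hxd2 : Differentiable ℝ (deriv x))
    (hyd1 : Differentiable ℝ y) (hyd2 : Differentiable ℝ (deriv y))
    (hx0 : x 0 = 0) (hy0 : y 0 = 0) (hx'0 : deriv x 0 = v) (hy'0 : deriv y 0 = 0)
    (hylat : ∀ t : ℝ, 0 ≤ t → |deriv (deriv y) t| ≤ a_lat)
    (hxbrk : ∀ t : ℝ, 0 ≤ t → deriv (deriv x) t ≥ -a_brk)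
    (hfwd : ∀ t : ℝ, 0 ≤ t → deriv x t ≥ 0)
    (t_c : ℝ) (ht_c : t_c = Real.sqrt (2 * y_c / a_lat)) :
    ∀ T : ℝ, 0 ≤ T → y T ≥ y_c →
      T ≥ t_c ∧ x T ≥ v * t_c - a_brk * t_c ^ 2 / 2 := by
  intro T hT hyT
  -- Step 1: y T ≤ a_lat * T^2 / 2
  -- h t = a_lat * t^2/2 - y t
  set h : ℝ → ℝ := fun t => a_lat * t ^ 2 / 2 - y t with hh
  have hhd : Differentiable ℝ h := by
    apply Differentiable.sub _ hyd1
    fun_prop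
  have hhderiv : deriv h = fun t => a_lat * t - deriv y t := by
    funext t
    rw [hh, deriv_fun_sub (by fun_prop) (hyd1 t)]
    have : deriv (fun t : ℝ => a_lat * t ^ 2 / 2) t = a_lat * t := by
      rw [deriv_div_const, deriv_const_mul _ (by fun_prop)]
      simp [mul_comm]
      ring
    rw [this]
  have hh'd : Differentiable ℝ (deriv h) := by
    rw [hhderiv]; exact Differentiable.sub (by fun_prop) hyd2
  have hh'' : ∀ t : ℝ, 0 ≤ t → 0 ≤ deriv (deriv h) t := by
    intro t ht
    rw [hhderiv, deriv_fun_sub (by fun_prop) (hyd2 t)]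
    have : deriv (fun t : ℝ => a_lat * t) t = a_lat := by
      rw [deriv_const_mul _ (by fun_prop)]; simp
    rw [this]
    have := abs_le.mp (hylat t ht)
    linarith [this.2]
  have hh'mono := mono_of_deriv_nonneg_Ici (deriv h) hh'd hh''
  have hh'nonneg : ∀ t : ℝ, 0 ≤ t → 0 ≤ deriv h t := by
    intro t ht
    have h0 : deriv h 0 = 0 := by rw [hhderiv]; simp [hy'0]
    have := hh'mono (Set.mem_Ici.mpr le_rfl) (Set.mem_Ici.mpr ht) ht
    linarith [this]
  have hhmono := mono_of_deriv_nonneg_Ici h hhd hh'nonneg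
  have hh0 : h 0 = 0 := by simp [hh, hy0]
  have hhT : 0 ≤ h T := by
    have := hhmono (Set.mem_Ici.mpr le_rfl) (Set.mem_Ici.mpr hT) hT
    linarith
  have hyle : y_c ≤ a_lat * T ^ 2 / 2 := by
    simp only [hh] at hhT; linarith
  -- T ≥ t_c
  have htcT : t_c ≤ T := by
    rw [ht_c]
    have h1 : 2 * y_c / a_lat ≤ T ^ 2 := by
      rw [div_le_iff₀ halat]
      nlinarith
    calc Real.sqrt (2 * y_c / a_lat) ≤ Real.sqrt (T ^ 2) := Real.sqrt_le_sqrt h1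
      _ = T := by rw [Real.sqrt_sq hT]
  have htc0 : 0 ≤ t_c := by rw [ht_c]; exact Real.sqrt_nonneg _
  refine ⟨htcT, ?_⟩
  -- Step 2: x t_c ≥ v * t_c - a_brk * t_c^2/2
  set φ : ℝ → ℝ := fun t => x t - (v * t - a_brk * t ^ 2 / 2) with hφ
  have hφd : Differentiable ℝ φ := Differentiable.sub hxd1 (by fun_prop)
  have hφderiv : deriv φ = fun t => deriv x t - (v - a_brk * t) := by
    funext t
    rw [hφ, deriv_fun_sub (hxd1 t) (by fun_prop)]
    congr 1
    rw [deriv_fun_sub (by fun_prop) (by fun_prop), deriv_const_mul _ (by fun_prop)]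
    rw [deriv_div_const, deriv_const_mul _ (by fun_prop)]
    simp
    ring
  have hφ'd : Differentiable ℝ (deriv φ) := by
    rw [hφderiv]; exact Differentiable.sub hxd2 (by fun_prop)
  have hφ'' : ∀ t : ℝ, 0 ≤ t → 0 ≤ deriv (deriv φ) t := by
    intro t ht
    rw [hφderiv, deriv_fun_sub (hxd2 t) (by fun_prop)]
    have : deriv (fun t : ℝ => v - a_brk * t) t = -a_brk := by
      rw [deriv_fun_sub (by fun_prop) (by fun_prop), deriv_const_mul _ (by fun_prop)]
      simp
    rw [this]
    have := hxbrk t ht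
    linarith
  have hφ'mono := mono_of_deriv_nonneg_Ici (deriv φ) hφ'd hφ''
  have hφ'nonneg : ∀ t : ℝ, 0 ≤ t → 0 ≤ deriv φ t := by
    intro t ht
    have h0 : deriv φ 0 = 0 := by rw [hφderiv]; simp [hx'0]
    have := hφ'mono (Set.mem_Ici.mpr le_rfl) (Set.mem_Ici.mpr ht) ht
    linarith
  have hφmono := mono_of_deriv_nonneg_Ici φ hφd hφ'nonneg
  have hφ0 : φ 0 = 0 := by simp [hφ, hx0]
  have hφtc : 0 ≤ φ t_c := by
    have := hφmono (Set.mem_Ici.mpr le_rfl) (Set.mem_Ici.mpr htc0) htc0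
    linarith
  have hxtc : x t_c ≥ v * t_c - a_brk * t_c ^ 2 / 2 := by
    simp only [hφ] at hφtc; linarith
  -- Step 3: x T ≥ x t_c since x nondecreasing
  have hxmono := mono_of_deriv_nonneg_Ici x hxd1 (fun t ht => hfwd t ht)
  have := hxmono (Set.mem_Ici.mpr htc0) (Set.mem_Ici.mpr hT) htcT
  linarith
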